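/- Let t, r ∈ ℕ and let N ⊆ {0,1}^d be a finite set of t-vectors such that the family {Δ(n) : n ∈ N} is a sunflower with core C, i.e., Δ(n) ∩ Δ(n') = C for any two distinct n, n' ∈ N. If |N| > r, then for every vector a ∈ {0,1}^d with |Δ(a)| ≤ r there exists n ∈ N such that δ(x,a) ≤ δ(n,a) for every t-vector x ∈ {0,1}^d with C ⊆ Δ(x); that is, N contains a vector of maximum Hamming distance to a among all t-vectors containing C. -/

import Mathlib

/-- The set of coordinates where a Boolean vector equals `true` (i.e. Δ(a)). -/
def ones {d : ℕ} (a : Fin d → Bool) : Finset (Fin d) :=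
  Finset.univ.filter fun i => a i = true

lemma ham_eq {d : ℕ} (x a : Fin d → Bool) :
    hammingDist x a + 2 * (ones x ∩ ones a).card = (ones x).card + (ones a).card := by
  have hset : (Finset.univ.filter fun i => x i ≠ a i)
      = (ones x \ ones a) ∪ (ones a \ ones x) := by
    ext i
    simp only [ones, Finset.mem_filter, Finset.mem_union, Finset.mem_sdiff, Finset.mem_univ,
      true_and]
    cases hx : x i <;> cases ha : a i <;> simp
  have hdisj : Disjoint (ones x \ ones a) (ones a \ ones x) := by
    apply Finset.disjoint_left.mpr
    intro i hi hi'
    simp only [Finset.mem_sdiff] at hi hi'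
    exact hi.2 hi'.1
  have hham : hammingDist x a = (ones x \ ones a).card + (ones a \ ones x).card := by
    rw [hammingDist, hset, Finset.card_union_of_disjoint hdisj]
  have h1 : (ones x \ ones a).card + (ones x ∩ ones a).card = (ones x).card :=
    Finset.card_sdiff_add_card_inter _ _
  have h2 : (ones a \ ones x).card + (ones a ∩ ones x).card = (ones a).card :=
    Finset.card_sdiff_add_card_inter _ _
  rw [Finset.inter_comm] at h2
  omega

theorem statement_0 {d : ℕ} (t r : ℕ) (N : Finset (Fin d → Bool)) (C : Finset (Fin d))
    (htvec : ∀ n ∈ N, (ones n).card = t)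
    (hsun : ∀ n ∈ N, ∀ n' ∈ N, n ≠ n' → ones n ∩ ones n' = C)
    (hbig : r < N.card) :
    ∀ a : Fin d → Bool, (ones a).card ≤ r →
      ∃ n ∈ N, ∀ x : Fin d → Bool, (ones x).card = t → C ⊆ ones x →
        hammingDist x a ≤ hammingDist n a := by
  intro a ha
  -- find n with ones n ∩ ones a ⊆ C
  have hkey : ∃ n ∈ N, ones n ∩ ones a ⊆ C := by
    by_contra h
    push_neg at h
    have hchoice : ∀ n ∈ N, ∃ i, i ∈ ones n ∩ ones a ∧ i ∉ C := by
      intro n hn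
      obtain ⟨i, hi, hiC⟩ := Finset.not_subset.mp (h n hn)
      exact ⟨i, hi, hiC⟩
    choose f hf hfC using hchoice
    have hinj : ∀ n (hn : n ∈ N), ∀ n' (hn' : n' ∈ N), f n hn = f n' hn' → n = n' := by
      intro n hn n' hn' heq
      by_contra hne
      have h1 := hf n hn
      have h2 := hf n' hn'
      rw [heq] at h1
      have : f n' hn' ∈ ones n ∩ ones n' := by
        simp only [Finset.mem_inter] at h1 h2 ⊢
        exact ⟨h1.1, h2.1⟩
      rw [hsun n hn n' hn' hne] at this
      exact hfC n' hn' this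
    obtain ⟨n0, hn0⟩ := Finset.card_pos.mp (by omega : 0 < N.card)
    have hcard : N.card ≤ (ones a).card := by
      apply Finset.card_le_card_of_injOn (fun n => if hn : n ∈ N then f n hn else f n0 hn0)
      · intro n hn
        rw [Finset.mem_coe] at hn
        simp only [hn, dif_pos]
        exact (Finset.mem_inter.mp (hf n hn)).2
      · intro n hn n' hn' heq
        simp only [Finset.mem_coe] at hn hn'
        simp only [hn, hn', dif_pos] at heq
        exact hinj n hn n' hn' heq
    omega
  obtain ⟨n, hn, hsub⟩ := hkey
  refine ⟨n, hn, fun x hxt hCx => ?_⟩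
  have hn_eq := ham_eq n a
  have hx_eq := ham_eq x a
  rw [htvec n hn] at hn_eq
  rw [hxt] at hx_eq
  have hle : (ones n ∩ ones a).card ≤ (ones x ∩ ones a).card := by
    apply Finset.card_le_card
    intro i hi
    have hiC := hsub hi
    simp only [Finset.mem_inter] at hi ⊢
    exact ⟨hCx hiC, hi.2⟩
  omega
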